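/- For groups G and H with groups Φ, Ψ acting by automorphisms and with CC(G,Φ), CC(H,Ψ) finite, one has CC(G×H, Φ×Ψ) ≥ CC(G,Φ) · CC(H,Ψ). In particular NCC(G×H) ≥ NCC(G)·NCC(H) when G and H have finite NCC. -/

import Mathlib

/-- `CC G Φ`: the smallest number of cyclic subgroups of `G` whose `Φ`-orbits cover `G`. -/
noncomputable def CC (G Φ : Type*) [Group G] [Group Φ] [MulDistribMulAction Φ G] : ℕ∞ :=
  sInf {n : ℕ∞ | ∃ s : Finset G, (s.card : ℕ∞) = n ∧
    ∀ x : G, ∃ g ∈ s, ∃ φ : Φ, x ∈ Subgroup.zpowers (φ • g)}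

/-- `NCC G`: the smallest number of cyclic subgroups of `G` whose conjugacy classes cover `G`. -/
noncomputable def NCC (G : Type*) [Group G] : ℕ∞ := CC G (ConjAct G)

/-- `CCprod`: the smallest number of cyclic subgroups of `G × H` whose orbits under the
product action of `Φ × Ψ` (acting componentwise) cover `G × H`. -/
noncomputable def CCprod (G H Φ Ψ : Type*) [Group G] [Group H] [Group Φ] [Group Ψ]
    [MulDistribMulAction Φ G] [MulDistribMulAction Ψ H] : ℕ∞ :=
  sInf {n : ℕ∞ | ∃ s : Finset (G × H), (s.card : ℕ∞) = n ∧
    ∀ x : G × H, ∃ g ∈ s, ∃ (φ : Φ) (ψ : Ψ), x ∈ Subgroup.zpowers (φ • g.1, ψ • g.2)}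

section Aux

variable {G Φ : Type*} [Group G] [Group Φ] [MulDistribMulAction Φ G]

/-- The union of the `Φ`-orbit of the cyclic subgroup generated by `a`. -/
private def valS (Φ : Type*) {G : Type*} [Group G] [Group Φ] [MulDistribMulAction Φ G]
    (a : G) : Set G :=
  ⋃ φ : Φ, (Subgroup.zpowers (φ • a) : Set G)

private lemma mem_valS {a x : G} :
    x ∈ valS Φ a ↔ ∃ φ : Φ, x ∈ Subgroup.zpowers (φ • a) := by
  simp [valS]

private lemma smul_zpow'' (φ : Φ) (a : G) (n : ℤ) : φ • (a ^ n) = (φ • a) ^ n :=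
  map_zpow (MulDistribMulAction.toMulAut Φ G φ) a n

/-- Monotonicity: if `a` lies in the orbit-cyclic set of `b`, then the orbit-cyclic set of `a`
is contained in that of `b`. -/
private lemma valS_mono {a b : G} (φ : Φ) (h : a ∈ Subgroup.zpowers (φ • b)) :
    valS Φ a ⊆ valS Φ b := by
  obtain ⟨u, hu⟩ := Subgroup.mem_zpowers_iff.1 h
  intro x hx
  obtain ⟨χ, hχ⟩ := mem_valS.1 hx
  obtain ⟨t, ht⟩ := Subgroup.mem_zpowers_iff.1 hχ
  refine mem_valS.2 ⟨χ * φ, Subgroup.mem_zpowers_iff.2 ⟨u * t, ?_⟩⟩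
  have h1 : χ • a = ((χ * φ) • b) ^ u := by
    rw [← hu, smul_zpow'', mul_smul]
  rw [← ht, h1, ← zpow_mul]

private lemma CC_le_card (s : Finset G)
    (h : ∀ x : G, ∃ g ∈ s, ∃ φ : Φ, x ∈ Subgroup.zpowers (φ • g)) :
    CC G Φ ≤ (s.card : ℕ∞) :=
  sInf_le ⟨s, rfl, h⟩

end Aux

section Key

variable {G H Φ Ψ : Type*} [Group G] [Group H] [Group Φ] [Group Ψ]
  [MulDistribMulAction Φ G] [MulDistribMulAction Ψ H]

private lemma mem_zpowers_fst {x : G} {y : H} {a : G} {b : H}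
    (h : (x, y) ∈ Subgroup.zpowers (a, b)) : x ∈ Subgroup.zpowers a := by
  obtain ⟨k, hk⟩ := Subgroup.mem_zpowers_iff.1 h
  exact Subgroup.mem_zpowers_iff.2 ⟨k, by
    have := congrArg Prod.fst hk
    simpa using this⟩

private lemma mem_zpowers_snd {x : G} {y : H} {a : G} {b : H}
    (h : (x, y) ∈ Subgroup.zpowers (a, b)) : y ∈ Subgroup.zpowers b := by
  obtain ⟨k, hk⟩ := Subgroup.mem_zpowers_iff.1 h
  exact Subgroup.mem_zpowers_iff.2 ⟨k, by
    have := congrArg Prod.snd hk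
    simpa using this⟩

/-- The key counting lemma: any finite family of cyclic subgroups of `G × H` whose
`Φ × Ψ`-orbits cover `G × H` has at least `CC G Φ * CC H Ψ` members. -/
private lemma key_lemma (s : Finset (G × H))
    (hs : ∀ x : G × H, ∃ g ∈ s, ∃ (φ : Φ) (ψ : Ψ),
      x ∈ Subgroup.zpowers (φ • g.1, ψ • g.2)) :
    CC G Φ * CC H Ψ ≤ (s.card : ℕ∞) := by
  classical
  set val : G × H → Set G := fun g => valS Φ g.1 with hval
  set t : Finset (Set G) := s.image val with hT
  set M : Finset (Set G) := t.filter (fun V => ∀ W ∈ t, V ⊆ W → V = W) with hM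
  -- every element of `t` is contained in a maximal element of `t`
  have hmax : ∀ V ∈ t, ∃ W ∈ M, V ⊆ W := by
    intro V hV
    obtain ⟨W, hW, hWmax⟩ :=
      (t.filter (fun W => V ⊆ W)).exists_maximal
        ⟨V, Finset.mem_filter.2 ⟨hV, subset_rfl⟩⟩
    rw [Finset.mem_filter] at hW
    refine ⟨W, Finset.mem_filter.2 ⟨hW.1, ?_⟩, hW.2⟩
    intro U hU hWU
    by_contra hne
    exact hne (subset_antisymm hWU (hWmax (Finset.mem_filter.2 ⟨hU, hW.2.trans hWU⟩)
      hWU))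
  -- each maximal value class supports a covering of `H`, hence has ≥ CC H Ψ members
  have fiber : ∀ V ∈ M, CC H Ψ ≤ ((s.filter (fun g => val g = V)).card : ℕ∞) := by
    intro V hV
    rw [Finset.mem_filter] at hV
    obtain ⟨g₀, hg₀s, hg₀⟩ := Finset.mem_image.1 hV.1
    have hcov : ∀ y : H, ∃ b ∈ (s.filter (fun g => val g = V)).image Prod.snd,
        ∃ ψ : Ψ, y ∈ Subgroup.zpowers (ψ • b) := by
      intro y
      obtain ⟨g, hg, φ, ψ, hmem⟩ := hs (g₀.1, y)
      have h1 : g₀.1 ∈ Subgroup.zpowers (φ • g.1) := mem_zpowers_fst hmem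
      have h2 : y ∈ Subgroup.zpowers (ψ • g.2) := mem_zpowers_snd hmem
      have hsub : V ⊆ val g := by
        rw [← hg₀]
        exact valS_mono φ h1
      have hVg : val g = V :=
        (hV.2 (val g) (Finset.mem_image_of_mem val hg) hsub).symm
      exact ⟨g.2, Finset.mem_image_of_mem _ (Finset.mem_filter.2 ⟨hg, hVg⟩), ψ, h2⟩
    calc CC H Ψ ≤ (((s.filter (fun g => val g = V)).image Prod.snd).card : ℕ∞) :=
          CC_le_card _ hcov
      _ ≤ _ := Nat.cast_le.2 Finset.card_image_le
  -- the maximal value classes cover `G`, hence there are ≥ CC G Φ of them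
  have repex : ∀ V : {V // V ∈ M}, ∃ a : G, valS Φ a = V.1 := by
    intro V
    obtain ⟨g, _, hgv⟩ := Finset.mem_image.1 (Finset.mem_filter.1 V.2).1
    exact ⟨g.1, hgv⟩
  choose rep hrep using repex
  set R : Finset G := M.attach.image rep with hR
  have hRcov : ∀ x : G, ∃ a ∈ R, ∃ φ : Φ, x ∈ Subgroup.zpowers (φ • a) := by
    intro x
    obtain ⟨g, hg, φ, ψ, hmem⟩ := hs (x, 1)
    have h1 : x ∈ Subgroup.zpowers (φ • g.1) := mem_zpowers_fst hmem
    have hx : x ∈ val g := mem_valS.2 ⟨φ, h1⟩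
    obtain ⟨W, hWM, hsub⟩ := hmax (val g) (Finset.mem_image_of_mem val hg)
    refine ⟨rep ⟨W, hWM⟩, Finset.mem_image_of_mem _ (Finset.mem_attach _ _), ?_⟩
    have hxW : x ∈ valS Φ (rep ⟨W, hWM⟩) := by
      rw [hrep ⟨W, hWM⟩]; exact hsub hx
    exact mem_valS.1 hxW
  have hCCG : CC G Φ ≤ (M.card : ℕ∞) := by
    refine le_trans (CC_le_card R hRcov) (Nat.cast_le.2 ?_)
    calc R.card ≤ M.attach.card := Finset.card_image_le
      _ = M.card := Finset.card_attach
  -- combine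
  have hsum : (M.card : ℕ∞) * CC H Ψ ≤ (s.card : ℕ∞) := by
    calc (M.card : ℕ∞) * CC H Ψ = ∑ _V ∈ M, CC H Ψ := by
          rw [Finset.sum_const, nsmul_eq_mul]
      _ ≤ ∑ V ∈ M, ((s.filter (fun g => val g = V)).card : ℕ∞) :=
          Finset.sum_le_sum fiber
      _ = ((∑ V ∈ M, (s.filter (fun g => val g = V)).card : ℕ) : ℕ∞) := by
          push_cast; rfl
      _ ≤ (s.card : ℕ∞) := by
          refine Nat.cast_le.2 ?_
          calc ∑ V ∈ M, (s.filter (fun g => val g = V)).card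
              ≤ ∑ V ∈ t, (s.filter (fun g => val g = V)).card :=
                Finset.sum_le_sum_of_subset (Finset.filter_subset _ _)
            _ = s.card :=
                (Finset.card_eq_sum_card_fiberwise
                  (fun g hg => Finset.mem_image_of_mem val hg)).symm
  exact le_trans (mul_le_mul_left hCCG _) hsum

end Key

/-- For groups `G`, `H` with actions of `Φ`, `Ψ` having finite covering numbers,
`CC(G×H, Φ×Ψ) ≥ CC(G,Φ) · CC(H,Ψ)`; in particular `NCC(G×H) ≥ NCC(G) · NCC(H)`
when `G` and `H` have finite NCC. -/
theorem stmt_5 {G H Φ Ψ : Type*} [Group G] [Group H] [Group Φ] [Group Ψ]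
    [MulDistribMulAction Φ G] [MulDistribMulAction Ψ H]
    (hG : CC G Φ ≠ ⊤) (hH : CC H Ψ ≠ ⊤) :
    CC G Φ * CC H Ψ ≤ CCprod G H Φ Ψ ∧
      (NCC G ≠ ⊤ → NCC H ≠ ⊤ → NCC G * NCC H ≤ NCC (G × H)) := by
  constructor
  · refine le_sInf ?_
    rintro n ⟨s, hcard, hcov⟩
    rw [← hcard]
    exact key_lemma s hcov
  · intro _ _
    refine le_sInf ?_
    rintro n ⟨s, hcard, hcov⟩
    rw [← hcard]
    refine key_lemma (Φ := ConjAct G) (Ψ := ConjAct H) s ?_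
    intro x
    obtain ⟨g, hg, φc, hmem⟩ := hcov x
    refine ⟨g, hg, ConjAct.toConjAct (ConjAct.ofConjAct φc).1,
      ConjAct.toConjAct (ConjAct.ofConjAct φc).2, ?_⟩
    have : (ConjAct.toConjAct (ConjAct.ofConjAct φc).1 • g.1,
        ConjAct.toConjAct (ConjAct.ofConjAct φc).2 • g.2) = φc • g := by
      simp [ConjAct.smul_def, Prod.ext_iff, Prod.fst_mul, Prod.snd_mul]
    rw [this]
    exact hmem
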